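/- The interventional consistency error dominates the interventional superresolution information loss: E_IC ≥ E_ISIL, i.e., D(α_Y·μ, μ'·α_X) ≥ D(μ', α_Y·μ·α_X⁺). -/

import Mathlib

open Finset Matrix

noncomputable section

/-- A probability vector on a finite type: nonnegative entries summing to 1. -/
def IsProbVec {X : Type*} [Fintype X] (p : X → ℝ) : Prop :=
  (∀ x, 0 ≤ p x) ∧ ∑ x, p x = 1

/-- Kullback–Leibler divergence, with the convention that terms with `p x = 0`
contribute `0`. -/
noncomputable def KL {X : Type*} [Fintype X] (p q : X → ℝ) : ℝ :=
  ∑ x, if p x = 0 then 0 else p x * Real.log (p x / q x)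

/-- Jensen–Shannon distance. -/
noncomputable def JSD {X : Type*} [Fintype X] (p q : X → ℝ) : ℝ :=
  Real.sqrt ((1 / 2) * KL p (fun x => (p x + q x) / 2)
    + (1 / 2) * KL q (fun x => (p x + q x) / 2))

lemma KL_eq {X : Type*} [Fintype X] (p q : X → ℝ) :
    KL p q = ∑ x, p x * Real.log (p x / q x) := by
  unfold KL
  refine Finset.sum_congr rfl fun x _ => ?_
  split <;> simp_all

lemma JSD_symm {X : Type*} [Fintype X] (p q : X → ℝ) : JSD p q = JSD q p := by
  have h : (fun x => (p x + q x) / 2) = (fun x => (q x + p x) / 2) := by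
    funext x; ring
  rw [JSD, JSD, h, add_comm]

/-- The log-sum inequality. -/
lemma logSum {ι : Type*} (s : Finset ι) (f g : ι → ℝ)
    (hf : ∀ i ∈ s, 0 ≤ f i) (hg : ∀ i ∈ s, 0 ≤ g i)
    (h : ∀ i ∈ s, g i = 0 → f i = 0) :
    (∑ i ∈ s, f i) * Real.log ((∑ i ∈ s, f i) / (∑ i ∈ s, g i))
      ≤ ∑ i ∈ s, f i * Real.log (f i / g i) := by
  set F := ∑ i ∈ s, f i with hF
  set G := ∑ i ∈ s, g i with hG
  by_cases hG0 : G = 0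
  · have hgz : ∀ i ∈ s, g i = 0 := by
      intro i hi
      have hs : ∑ i ∈ s, g i = 0 := by rw [← hG]; exact hG0
      exact (Finset.sum_eq_zero_iff_of_nonneg hg).mp hs i hi
    have hfz : ∀ i ∈ s, f i = 0 := fun i hi => h i hi (hgz i hi)
    have hF0 : F = 0 := Finset.sum_eq_zero hfz
    rw [hF0]
    simp only [zero_mul]
    apply Finset.sum_nonneg
    intro i hi; rw [hfz i hi]; simp
  · have hGpos : 0 < G := lt_of_le_of_ne (Finset.sum_nonneg hg) (Ne.symm hG0)
    have key := (Real.convexOn_mul_log).map_sum_le (t := s)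
      (w := fun i => g i / G) (p := fun i => f i / g i)
      (fun i hi => div_nonneg (hg i hi) hGpos.le)
      (by rw [← Finset.sum_div, div_self hG0])
      (fun i hi => Set.mem_Ici.mpr (div_nonneg (hf i hi) (hg i hi)))
    have hwp : ∀ i ∈ s, (g i / G) • (f i / g i) = f i / G := by
      intro i hi
      by_cases hgi : g i = 0
      · simp [hgi, h i hi hgi]
      · field_simp
        rw [smul_eq_mul]; field_simp
    rw [Finset.sum_congr rfl hwp] at key
    rw [← Finset.sum_div] at key
    have hsmul : ∀ i ∈ s, (g i / G) • ((f i / g i) * Real.log (f i / g i))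
        = (f i * Real.log (f i / g i)) / G := by
      intro i hi
      by_cases hgi : g i = 0
      · simp [hgi, h i hi hgi]
      · field_simp
        rw [smul_eq_mul]; field_simp
    rw [Finset.sum_congr rfl hsmul, ← Finset.sum_div] at key
    have := mul_le_mul_of_nonneg_left key hGpos.le
    calc F * Real.log (F / G) = G * ((F / G) * Real.log (F / G)) := by
          field_simp
      _ ≤ G * ((∑ i ∈ s, f i * Real.log (f i / g i)) / G) := this
      _ = ∑ i ∈ s, f i * Real.log (f i / g i) := by field_simp

/-- Per-coordinate convexity step for the JS divergence. -/
lemma key_pointwise {X : Type*} (S : Finset X) (hS : S.Nonempty)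
    (a : ℝ) (ha : 0 ≤ a) (b : X → ℝ) (hb : ∀ x ∈ S, 0 ≤ b x) :
    (S.card : ℝ) * (a * Real.log (a / ((a + (∑ x ∈ S, b x) / S.card) / 2))
        + ((∑ x ∈ S, b x) / S.card) *
          Real.log (((∑ x ∈ S, b x) / S.card) / ((a + (∑ x ∈ S, b x) / S.card) / 2)))
      ≤ ∑ x ∈ S, (a * Real.log (a / ((a + b x) / 2))
          + b x * Real.log (b x / ((a + b x) / 2))) := by
  set n : ℝ := (S.card : ℝ) with hn
  have hnpos : 0 < n := hn ▸ (Nat.cast_pos.mpr (Finset.card_pos.mpr hS))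
  set B := ∑ x ∈ S, b x with hB
  have hBnn : 0 ≤ B := Finset.sum_nonneg hb
  set M := ∑ x ∈ S, (a + b x) / 2 with hM
  have hMval : M = (n * a + B) / 2 := by
    rw [hM, ← Finset.sum_div, Finset.sum_add_distrib, Finset.sum_const, nsmul_eq_mul]
  have h1 : (∑ x ∈ S, (a : ℝ)) = n * a := by
    rw [Finset.sum_const, nsmul_eq_mul]
  have hg : ∀ x ∈ S, (0:ℝ) ≤ (a + b x) / 2 := fun x hx => by
    have := hb x hx; linarith
  have ls1 := logSum S (fun _ => a) (fun x => (a + b x) / 2)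
    (fun x _ => ha) hg
    (fun x hx hz => by have := hb x hx; linarith)
  have ls2 := logSum S b (fun x => (a + b x) / 2) hb hg
    (fun x hx hz => by have := hb x hx; linarith)
  rw [h1] at ls1
  -- rewrite LHS
  have hden : (a + B / n) / 2 = M / n := by
    rw [hMval]; field_simp
  have e1 : a / ((a + B / n) / 2) = (n * a) / M := by
    rw [hden, div_div_eq_mul_div, mul_comm]
  have e2 : (B / n) / ((a + B / n) / 2) = B / M := by
    rw [hden]
    by_cases hM0 : M = 0
    · simp [hM0]
    · field_simp
  have lhs_eq : n * (a * Real.log (a / ((a + B / n) / 2))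
      + (B / n) * Real.log ((B / n) / ((a + B / n) / 2)))
      = (n * a) * Real.log ((n * a) / M) + B * Real.log (B / M) := by
    rw [e1, e2]
    field_simp
  rw [lhs_eq, Finset.sum_add_distrib]
  rw [← hM] at ls1 ls2
  exact add_le_add ls1 ls2

/-- JSD against an average of distributions is dominated by JSD against one of them. -/
lemma jsd_avg {Y X : Type*} [Fintype Y] {S : Finset X} (hS : S.Nonempty)
    (q : Y → ℝ) (p : X → Y → ℝ) (hq : ∀ y, 0 ≤ q y) (hp : ∀ x y, 0 ≤ p x y) :
    ∃ x ∈ S, JSD q (fun y => (∑ z ∈ S, p z y) / S.card) ≤ JSD q (p x) := by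
  set n : ℝ := (S.card : ℝ) with hn
  have hnpos : 0 < n := hn ▸ (Nat.cast_pos.mpr (Finset.card_pos.mpr hS))
  set pbar : Y → ℝ := fun y => (∑ z ∈ S, p z y) / S.card with hpbar
  -- inner value of JSD q r
  set J : (Y → ℝ) → ℝ := fun r =>
    (1 / 2) * KL q (fun y => (q y + r y) / 2) + (1 / 2) * KL r (fun y => (q y + r y) / 2)
    with hJ
  have hJr : ∀ r : Y → ℝ, J r = (1/2) * ∑ y, (q y * Real.log (q y / ((q y + r y)/2))
      + r y * Real.log (r y / ((q y + r y)/2))) := by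
    intro r
    rw [hJ]
    simp only [KL_eq]
    rw [Finset.sum_add_distrib]
    ring
  have hkey : n * J pbar ≤ ∑ x ∈ S, J (p x) := by
    simp only [hJr]
    rw [← Finset.mul_sum, mul_left_comm]
    refine mul_le_mul_of_nonneg_left ?_ (by norm_num : (0:ℝ) ≤ 1/2)
    rw [Finset.mul_sum, Finset.sum_comm]
    apply Finset.sum_le_sum
    intro y _
    have := key_pointwise S hS (q y) (hq y) (fun x => p x y) (fun x _ => hp x y)
    simpa [hpbar, hn] using this
  -- compare with constant sum
  have hconst : ∑ _x ∈ S, J pbar = n * J pbar := by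
    rw [Finset.sum_const, nsmul_eq_mul]
  have hex : ∃ x ∈ S, J pbar ≤ J (p x) := by
    apply Finset.exists_le_of_sum_le hS
    rw [hconst]; exact hkey
  obtain ⟨x, hx, hle⟩ := hex
  exact ⟨x, hx, Real.sqrt_le_sqrt hle⟩

/-- A column-stochastic matrix: nonnegative entries, every column sums to 1. -/
def IsColStoch {Y X : Type*} [Fintype Y] [Fintype X] (M : Matrix Y X ℝ) : Prop :=
  (∀ y x, 0 ≤ M y x) ∧ ∀ x, ∑ y, M y x = 1

/-- The sup-JSD distance between two matrices of the same shape: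
the maximum over columns of the JSD between corresponding columns. -/
noncomputable def supJSD {Y X : Type*} [Fintype Y] [Fintype X] [Nonempty X]
    (M N : Matrix Y X ℝ) : ℝ :=
  Finset.univ.sup' Finset.univ_nonempty fun x => JSD (fun y => M y x) (fun y => N y x)

/-- An abstraction matrix: entries in {0,1}, every column contains exactly one 1,
and every row contains at least one 1. -/
def IsAbsMatrix {N M : Type*} [Fintype N] [Fintype M] (α : Matrix N M ℝ) : Prop :=
  (∀ j i, α j i = 0 ∨ α j i = 1) ∧ (∀ i, ∃! j, α j i = 1) ∧ (∀ j, ∃ i, α j i = 1)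

/-- The pseudo-inverse `α⁺ = αᵀ·(α·αᵀ)⁻¹` of an abstraction matrix. -/
noncomputable def pinv {N M : Type*} [Fintype N] [Fintype M] [DecidableEq N]
    (α : Matrix N M ℝ) : Matrix M N ℝ :=
  αᵀ * (α * αᵀ)⁻¹

theorem ic_ge_isil {X X' Y Y' : Type*}
    [Fintype X] [Nonempty X] [Fintype X'] [Nonempty X']
    [Fintype Y] [Nonempty Y] [Fintype Y'] [Nonempty Y']
    [DecidableEq X'] [DecidableEq Y']
    (μ : Matrix Y X ℝ) (μ' : Matrix Y' X' ℝ)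
    (αX : Matrix X' X ℝ) (αY : Matrix Y' Y ℝ)
    (hμ : IsColStoch μ) (hμ' : IsColStoch μ')
    (hαX : IsAbsMatrix αX) (hαY : IsAbsMatrix αY) :
    supJSD (αY * μ) (μ' * αX) ≥ supJSD μ' (αY * μ * pinv αX) := by
  obtain ⟨hαX01, hαXcol, hαXrow⟩ := hαX
  -- the function underlying αX
  choose f hf1 hfu using hαXcol
  have hαXeq : ∀ x' x, αX x' x = if x' = f x then 1 else 0 := by
    intro x' x
    split
    · next h => rw [h]; exact hf1 x
    · next h =>
      rcases hαX01 x' x with h0 | h1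
      · exact h0
      · exact absurd (hfu x x' h1) h
  -- fibers
  set S : X' → Finset X := fun x' => Finset.univ.filter (fun x => f x = x') with hSdef
  have hSne : ∀ x', (S x').Nonempty := by
    intro x'
    obtain ⟨x, hx⟩ := hαXrow x'
    exact ⟨x, by simp [hSdef, (hfu x x' hx).symm]⟩
  have hcardpos : ∀ x', 0 < ((S x').card : ℝ) :=
    fun x' => Nat.cast_pos.mpr (Finset.card_pos.mpr (hSne x'))
  -- αX * αXᵀ is diagonal
  have hAAT : αX * αXᵀ = Matrix.diagonal (fun x' => ((S x').card : ℝ)) := by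
    ext x1 x2
    rw [Matrix.mul_apply]
    simp only [Matrix.transpose_apply, hαXeq, Matrix.diagonal]
    by_cases h12 : x1 = x2
    · subst h12
      simp only [Matrix.of_apply, if_pos rfl]
      have hterm : ∀ x : X, ((if x1 = f x then (1:ℝ) else 0) * if x1 = f x then 1 else 0)
          = if f x = x1 then 1 else 0 := fun x => by
        by_cases h : x1 = f x <;> simp [h, eq_comm]
      rw [Finset.sum_congr rfl (fun x _ => hterm x), Finset.sum_boole]
      simp [hSdef]
    · simp only [Matrix.of_apply, if_neg h12]
      apply Finset.sum_eq_zero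
      intro x _
      by_cases h1 : x1 = f x <;> by_cases h2 : x2 = f x <;> simp_all
  have hinv : (αX * αXᵀ)⁻¹ = Matrix.diagonal (fun x' => (((S x').card : ℝ))⁻¹) := by
    apply Matrix.inv_eq_right_inv
    rw [hAAT, Matrix.diagonal_mul_diagonal]
    rw [show (fun x' => ((S x').card : ℝ) * (((S x').card : ℝ))⁻¹) = fun _ => (1:ℝ) from
      funext fun x' => mul_inv_cancel₀ (hcardpos x').ne']
    exact Matrix.diagonal_one
  have hpinv : ∀ x x', pinv αX x x' = if f x = x' then (((S x').card : ℝ))⁻¹ else 0 := by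
    intro x x'
    rw [pinv, hinv, Matrix.mul_diagonal, Matrix.transpose_apply, hαXeq]
    by_cases h : x' = f x <;> simp [h, eq_comm]
  -- column of αY μ pinv αX is a fiber average
  have hM : ∀ y' x', (αY * μ * pinv αX) y' x'
      = (∑ x ∈ S x', (αY * μ) y' x) / ((S x').card : ℝ) := by
    intro y' x'
    rw [Matrix.mul_apply]
    simp only [hpinv]
    rw [show (fun x => (αY * μ) y' x * if f x = x' then (((S x').card : ℝ))⁻¹ else 0)
        = fun x => if f x = x' then (αY * μ) y' x * (((S x').card : ℝ))⁻¹ else 0 from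
      funext fun x => by by_cases h : f x = x' <;> simp [h]]
    rw [← Finset.sum_filter]
    have hfil : Finset.univ.filter (fun a => f a = x') = S x' := rfl
    rw [hfil, ← Finset.sum_mul, div_eq_mul_inv]
  have hN : ∀ y' x, (μ' * αX) y' x = μ' y' (f x) := by
    intro y' x
    rw [Matrix.mul_apply]
    simp [hαXeq]
  -- nonnegativity of αY * μ
  have hαY0 : ∀ y' y, 0 ≤ αY y' y := by
    intro y' y
    rcases hαY.1 y' y with h | h <;> rw [h] <;> norm_num
  have hAYμ : ∀ y' x, 0 ≤ (αY * μ) y' x := by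
    intro y' x
    rw [Matrix.mul_apply]
    exact Finset.sum_nonneg fun y _ => mul_nonneg (hαY0 y' y) (hμ.1 y x)
  -- main estimate
  rw [ge_iff_le, supJSD, supJSD]
  apply Finset.sup'_le
  intro x' _
  obtain ⟨x₀, hx₀, hle⟩ := jsd_avg (hSne x') (fun y' => μ' y' x')
    (fun x y' => (αY * μ) y' x) (fun y' => hμ'.1 y' x') (fun x y' => hAYμ y' x)
  have hfx₀ : f x₀ = x' := by
    simpa [hSdef] using hx₀
  have hcol : (fun y' => (αY * μ * pinv αX) y' x')
      = fun y' => (∑ z ∈ S x', (αY * μ) y' z) / ((S x').card : ℝ) := by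
    funext y'; exact hM y' x'
  rw [hcol]
  refine le_trans hle ?_
  rw [JSD_symm]
  have hq : (fun y' => μ' y' x') = fun y' => (μ' * αX) y' x₀ := by
    funext y'; rw [hN y' x₀, hfx₀]
  rw [hq]
  exact Finset.le_sup' (f := fun x => JSD (fun y => (αY * μ) y x) (fun y => (μ' * αX) y x))
    (Finset.mem_univ x₀)
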